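/- arXiv:0801.0155 — 3 statements merged into one kernel-verified Lean document; each statement's English description precedes it below -/
import Mathlib

section
/- For any n×n Hermitian matrices A and B, the Lévy distance between their empirical spectral measures μ_A = (1/n)∑δ_{λ_i(A)} and μ_B = (1/n)∑δ_{λ_i(B)} satisfies L(μ_A, μ_B) ≤ rank(A − B)/n. -/
open Matrix Finset
open scoped Classical

private lemma aux_inner_sum {n : ℕ} {E : Type*} [NormedAddCommGroup E] [InnerProductSpace ℂ E]
    (b : OrthonormalBasis (Fin n) ℂ E) (μ : Fin n → ℝ) (T : E →ₗ[ℂ] E)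
    (hT : ∀ i, T (b i) = (μ i : ℂ) • b i) (v : E) :
    (inner ℂ v (T v) : ℂ) = ((∑ i, μ i * ‖b.repr v i‖ ^ 2 : ℝ) : ℂ) := by
  have h1 : T v = ∑ i, (b.repr v i * (μ i : ℂ)) • b i := by
    conv_lhs => rw [← b.sum_repr v]
    rw [map_sum]
    refine Finset.sum_congr rfl fun i _ => ?_
    rw [LinearMap.map_smul, hT i, smul_smul]
  rw [h1, inner_sum]
  push_cast
  refine Finset.sum_congr rfl fun i _ => ?_
  rw [inner_smul_right]
  have h2 : (inner ℂ v (b i) : ℂ) = starRingEnd ℂ (b.repr v i) := by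
    rw [b.repr_apply_apply, inner_conj_symm]
  rw [h2]
  have h3 : b.repr v i * starRingEnd ℂ (b.repr v i) = ((‖b.repr v i‖ : ℂ)) ^ 2 := by
    rw [Complex.mul_conj]
    simp [Complex.normSq_eq_norm_sq]
  calc b.repr v i * (μ i : ℂ) * starRingEnd ℂ (b.repr v i)
      = (μ i : ℂ) * (b.repr v i * starRingEnd ℂ (b.repr v i)) := by ring
    _ = (μ i : ℂ) * ((‖b.repr v i‖ : ℂ)) ^ 2 := by rw [h3]

private lemma count_aux {n : ℕ} (A B : Matrix (Fin n) (Fin n) ℂ)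
    (hA : A.IsHermitian) (hB : B.IsHermitian) (x : ℝ) :
    (univ.filter fun i => hA.eigenvalues i ≤ x).card ≤
      (univ.filter fun i => hB.eigenvalues i ≤ x).card + (A - B).rank := by
  set bA := hA.eigenvectorBasis with hbA
  set bB := hB.eigenvectorBasis with hbB
  set SA : Set (Fin n) := {i | hA.eigenvalues i ≤ x} with hSA
  set SB : Set (Fin n) := {i | ¬ hB.eigenvalues i ≤ x} with hSB
  set V : Submodule ℂ (EuclideanSpace ℂ (Fin n)) := Submodule.span ℂ (⇑bA '' SA) with hV
  set W : Submodule ℂ (EuclideanSpace ℂ (Fin n)) := Submodule.span ℂ (⇑bB '' SB) with hW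
  set K : Submodule ℂ (EuclideanSpace ℂ (Fin n)) :=
    LinearMap.ker (Matrix.toEuclideanLin (A - B)) with hK
  -- eigen-equations for the Euclidean linear maps
  have hTA : ∀ i, Matrix.toEuclideanLin A (bA i) = ((hA.eigenvalues i : ℂ)) • bA i := by
    intro i
    ext j
    have := congrFun (hA.mulVec_eigenvectorBasis i) j
    simpa [Matrix.toEuclideanLin_apply, Complex.real_smul] using this
  have hTB : ∀ i, Matrix.toEuclideanLin B (bB i) = ((hB.eigenvalues i : ℂ)) • bB i := by
    intro i
    ext j
    have := congrFun (hB.mulVec_eigenvectorBasis i) j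
    simpa [Matrix.toEuclideanLin_apply, Complex.real_smul] using this
  -- the triple intersection is trivial
  have hbot : V ⊓ W ⊓ K = ⊥ := by
    rw [Submodule.eq_bot_iff]
    rintro v ⟨⟨hvV, hvW⟩, hvK⟩
    by_contra hv0
    -- repr vanishing
    have hrA : ∀ i, i ∉ SA → bA.repr v i = 0 := by
      intro i hi
      have hmem : v ∈ Submodule.span ℂ (⇑bA.toBasis '' SA) := by
        rwa [OrthonormalBasis.coe_toBasis]
      have hsupp := (Module.Basis.mem_span_image bA.toBasis).1 hmem
      have : i ∉ (bA.toBasis.repr v).support := fun h => hi (hsupp h)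
      rw [← bA.coe_toBasis_repr_apply]
      exact Finsupp.notMem_support_iff.1 this
    have hrB : ∀ i, i ∉ SB → bB.repr v i = 0 := by
      intro i hi
      have hmem : v ∈ Submodule.span ℂ (⇑bB.toBasis '' SB) := by
        rwa [OrthonormalBasis.coe_toBasis]
      have hsupp := (Module.Basis.mem_span_image bB.toBasis).1 hmem
      have : i ∉ (bB.toBasis.repr v).support := fun h => hi (hsupp h)
      rw [← bB.coe_toBasis_repr_apply]
      exact Finsupp.notMem_support_iff.1 this
    -- inner product identities
    have hIA := aux_inner_sum bA hA.eigenvalues (Matrix.toEuclideanLin A) hTA v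
    have hIB := aux_inner_sum bB hB.eigenvalues (Matrix.toEuclideanLin B) hTB v
    have hid : ∀ i, (LinearMap.id : EuclideanSpace ℂ (Fin n) →ₗ[ℂ] _) (bA i)
        = ((1 : ℝ) : ℂ) • bA i := by intro i; simp
    have hid' : ∀ i, (LinearMap.id : EuclideanSpace ℂ (Fin n) →ₗ[ℂ] _) (bB i)
        = ((1 : ℝ) : ℂ) • bB i := by intro i; simp
    have hNA := aux_inner_sum bA (fun _ => (1 : ℝ)) LinearMap.id hid v
    have hNB := aux_inner_sum bB (fun _ => (1 : ℝ)) LinearMap.id hid' v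
    simp only [LinearMap.id_apply, one_mul] at hNA hNB
    have hNN : (∑ i, ‖bA.repr v i‖ ^ 2) = ∑ i, ‖bB.repr v i‖ ^ 2 := by
      have := hNA.symm.trans hNB
      exact_mod_cast this
    -- A v = B v on the kernel
    have hAB : Matrix.toEuclideanLin A v = Matrix.toEuclideanLin B v := by
      have : Matrix.toEuclideanLin (A - B) v = 0 := hvK
      rw [map_sub, LinearMap.sub_apply, sub_eq_zero] at this
      exact this
    have hABsum : (∑ i, hA.eigenvalues i * ‖bA.repr v i‖ ^ 2)
        = ∑ i, hB.eigenvalues i * ‖bB.repr v i‖ ^ 2 := by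
      have hc : (((∑ i, hA.eigenvalues i * ‖bA.repr v i‖ ^ 2 : ℝ)) : ℂ)
          = (((∑ i, hB.eigenvalues i * ‖bB.repr v i‖ ^ 2 : ℝ)) : ℂ) := by
        rw [← hIA, hAB, hIB]
      exact_mod_cast hc
    -- bounds
    have hle : (∑ i, hA.eigenvalues i * ‖bA.repr v i‖ ^ 2) ≤ x * ∑ i, ‖bA.repr v i‖ ^ 2 := by
      rw [Finset.mul_sum]
      refine Finset.sum_le_sum fun i _ => ?_
      by_cases hi : i ∈ SA
      · exact mul_le_mul_of_nonneg_right hi (by positivity)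
      · rw [hrA i hi]; simp
    have hex : ∃ i, bB.repr v i ≠ 0 := by
      by_contra hc
      push_neg at hc
      apply hv0
      have : bB.repr v = 0 := by
        ext i
        exact hc i
      simpa using bB.repr.map_eq_zero_iff.1 this
    obtain ⟨i₀, hi₀⟩ := hex
    have hi₀S : i₀ ∈ SB := by
      by_contra hc
      exact hi₀ (hrB i₀ hc)
    have hgt : x * (∑ i, ‖bB.repr v i‖ ^ 2) < ∑ i, hB.eigenvalues i * ‖bB.repr v i‖ ^ 2 := by
      rw [Finset.mul_sum]
      refine Finset.sum_lt_sum (fun i _ => ?_) ⟨i₀, Finset.mem_univ i₀, ?_⟩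
      · by_cases hi : i ∈ SB
        · exact mul_le_mul_of_nonneg_right (le_of_lt (not_le.1 hi)) (by positivity)
        · rw [hrB i hi]; simp
      · have hpos : (0:ℝ) < ‖bB.repr v i₀‖ ^ 2 := pow_pos (norm_pos_iff.2 hi₀) 2
        exact mul_lt_mul_of_pos_right (not_le.1 hi₀S) hpos
    rw [hNN] at hle
    linarith [hABsum ▸ hle]
  -- dimension counting
  have hdimV : Module.finrank ℂ V = (univ.filter fun i => hA.eigenvalues i ≤ x).card := by
    have hli : LinearIndependent ℂ (fun i : SA => bA i) := by
      have := bA.toBasis.linearIndependent.comp ((↑) : SA → Fin n) Subtype.val_injective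
      exact this
    have himg : ⇑bA '' SA = Set.range (fun i : SA => bA i) := Set.image_eq_range _ _
    rw [hV, himg, finrank_span_eq_card hli, ← Set.toFinset_card]
    congr 1
    ext i
    simp [hSA]
  have hdimW : Module.finrank ℂ W = (univ.filter fun i => ¬ hB.eigenvalues i ≤ x).card := by
    have hli : LinearIndependent ℂ (fun i : SB => bB i) := by
      have := bB.toBasis.linearIndependent.comp ((↑) : SB → Fin n) Subtype.val_injective
      exact this
    have himg : ⇑bB '' SB = Set.range (fun i : SB => bB i) := Set.image_eq_range _ _
    rw [hW, himg, finrank_span_eq_card hli, ← Set.toFinset_card]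
    congr 1
    ext i
    simp [hSB]
  have hdimK : Module.finrank ℂ K + (A - B).rank = n := by
    have hrank : (A - B).rank
        = Module.finrank ℂ (LinearMap.range (Matrix.toEuclideanLin (A - B))) :=
      rank_eq_finrank_range_toLin (A - B) (PiLp.basisFun 2 ℂ (Fin n)) (PiLp.basisFun 2 ℂ (Fin n))
    have hrn := LinearMap.finrank_range_add_finrank_ker (Matrix.toEuclideanLin (A - B))
    rw [finrank_euclideanSpace_fin] at hrn
    have hKK : Module.finrank ℂ K
        = Module.finrank ℂ (LinearMap.ker (Matrix.toEuclideanLin (A - B))) := rfl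
    omega
  have h1 : Module.finrank ℂ ↥(V ⊓ W) + Module.finrank ℂ K ≤ n := by
    have := Submodule.finrank_sup_add_finrank_inf_eq (V ⊓ W) K
    have h0 : Module.finrank ℂ ↥((V ⊓ W) ⊓ K) = 0 := by rw [hbot]; simp
    have hle := Submodule.finrank_le ((V ⊓ W) ⊔ K)
    rw [finrank_euclideanSpace_fin] at hle
    omega
  have h2 : Module.finrank ℂ V + Module.finrank ℂ W ≤ n + Module.finrank ℂ ↥(V ⊓ W) := by
    have := Submodule.finrank_sup_add_finrank_inf_eq V W
    have hle := Submodule.finrank_le (V ⊔ W)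
    rw [finrank_euclideanSpace_fin] at hle
    omega
  have h3 : (univ.filter fun i => ¬ hB.eigenvalues i ≤ x).card
      + (univ.filter fun i => hB.eigenvalues i ≤ x).card = n := by
    have := Finset.card_filter_add_card_filter_not (s := (univ : Finset (Fin n)))
      (p := fun i => hB.eigenvalues i ≤ x)
    simp only [Finset.card_univ, Fintype.card_fin] at this
    omega
  omega

private lemma rank_neg_sub {n : ℕ} (A B : Matrix (Fin n) (Fin n) ℂ) :
    (B - A).rank = (A - B).rank := by
  have h : B - A = -(A - B) := (neg_sub A B).symm
  rw [h]
  unfold Matrix.rank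
  have : (-(A - B)).mulVecLin = -((A - B).mulVecLin) := by
    ext v i
    simp [Matrix.mulVecLin, Matrix.neg_mulVec]
  rw [this, LinearMap.range_neg]

/-- Rank difference inequality: the Lévy distance between the empirical spectral
measures of two Hermitian matrices is at most `rank (A - B) / n`. -/
theorem stmt_1 {n : ℕ} (hn : 0 < n) (A B : Matrix (Fin n) (Fin n) ℂ)
    (hA : A.IsHermitian) (hB : B.IsHermitian)
    (FA : ℝ → ℝ) (FB : ℝ → ℝ)
    (hFA : ∀ x, FA x = (univ.filter fun i => hA.eigenvalues i ≤ x).card / n)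
    (hFB : ∀ x, FB x = (univ.filter fun i => hB.eigenvalues i ≤ x).card / n) :
    sInf {h : ℝ | 0 ≤ h ∧ ∀ x : ℝ, FA (x - h) - h ≤ FB x ∧ FB x ≤ FA (x + h) + h}
      ≤ (A - B).rank / n := by
  have hn' : (0:ℝ) < n := by exact_mod_cast hn
  set r : ℝ := ((A - B).rank : ℝ) / n with hr
  have hr0 : 0 ≤ r := by positivity
  have hmono : ∀ y z : ℝ, y ≤ z → FA y ≤ FA z := by
    intro y z hyz
    rw [hFA, hFA]
    exact div_le_div_of_nonneg_right (Nat.cast_le.2 (Finset.card_le_card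
      (Finset.monotone_filter_right _ fun i _ hi => le_trans hi hyz))) hn'.le
  have hABle : ∀ y : ℝ, FA y ≤ FB y + r := by
    intro y
    have hc := count_aux A B hA hB y
    rw [hFA, hFB, hr]
    rw [← add_div]
    gcongr
    exact_mod_cast hc
  have hBAle : ∀ y : ℝ, FB y ≤ FA y + r := by
    intro y
    have hc := count_aux B A hB hA y
    rw [rank_neg_sub] at hc
    rw [hFA, hFB, hr]
    rw [← add_div]
    gcongr
    exact_mod_cast hc
  apply csInf_le
  · exact ⟨0, fun h hh => hh.1⟩
  · refine ⟨hr0, fun y => ⟨?_, ?_⟩⟩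
    · have h1 := hmono (y - r) y (by linarith)
      have h2 := hABle y
      linarith
    · have h1 := hmono y (y + r) (by linarith)
      have h2 := hBAle y
      linarith
end

section
/- The function f(x) = (k/(2π))·√(4(k−1) − x²)/(k² − x²) for |x| ≤ 2√(k−1) (and f(x)=0 otherwise) is a probability density on ℝ, for every integer k ≥ 2. -/
open MeasureTheory

open Real Set

set_option maxHeartbeats 1000000 in
lemma deriv_key (a b d : ℝ) (ha : 0 < a) (hab : a ≤ b) (hb : 0 < b)
    (hd2 : d^2 = b^2 - a^2) (hd0 : 0 ≤ d)
    (x : ℝ) (hx : x ∈ Ioo (-a) a) :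
    HasDerivAt (fun y : ℝ =>
      Real.arcsin (y/a) - (d/b) * Real.arcsin (d * y / (a * Real.sqrt (b^2 - y^2))))
      (Real.sqrt (a^2 - x^2) / (b^2 - x^2)) x := by
  have hx2 : x^2 < a^2 := sq_lt_sq' hx.1 hx.2
  have hbx : 0 < b^2 - x^2 := by nlinarith
  have hax : 0 < a^2 - x^2 := by linarith
  have hs0 : 0 < Real.sqrt (b^2 - x^2) := Real.sqrt_pos.2 hbx
  have hss : Real.sqrt (b^2 - x^2) ^ 2 = b^2 - x^2 := Real.sq_sqrt hbx.le
  have ht0 : 0 < Real.sqrt (a^2 - x^2) := Real.sqrt_pos.2 hax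
  have htt : Real.sqrt (a^2 - x^2) ^ 2 = a^2 - x^2 := Real.sq_sqrt hax.le
  have hA : HasDerivAt (fun y => Real.arcsin (y/a)) (1/Real.sqrt (a^2 - x^2)) x := by
    have h1 : x/a ≠ -1 := by
      intro h
      rw [div_eq_iff ha.ne'] at h
      simp only [neg_one_mul] at h
      rw [h] at hx
      exact absurd hx.1 (lt_irrefl _)
    have h2 : x/a ≠ 1 := by
      intro h
      rw [div_eq_iff ha.ne', one_mul] at h
      rw [h] at hx
      exact absurd hx.2 (lt_irrefl _)
    have := (Real.hasDerivAt_arcsin h1 h2).comp x ((hasDerivAt_id x).div_const a)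
    refine this.congr_deriv (Eq.symm ?_)
    have he : 1 - (x/a)^2 = (Real.sqrt (a^2 - x^2)/a)^2 := by
      rw [div_pow, div_pow, htt]
      field_simp
    rw [he, Real.sqrt_sq (by positivity)]
    field_simp
  have hsd : HasDerivAt (fun y => Real.sqrt (b^2 - y^2)) (-x / Real.sqrt (b^2 - x^2)) x := by
    have := (Real.hasDerivAt_sqrt hbx.ne').comp x ((hasDerivAt_pow 2 x).const_sub (b^2))
    refine this.congr_deriv (Eq.symm ?_)
    field_simp
    ring
  have hden0 : a * Real.sqrt (b^2 - x^2) ≠ 0 := by positivity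
  have hu : HasDerivAt (fun y => d * y / (a * Real.sqrt (b^2 - y^2)))
      (d * b^2 / (a * (b^2 - x^2) * Real.sqrt (b^2 - x^2))) x := by
    have hnum : HasDerivAt (fun y => d * y) d x := by
      simpa using (hasDerivAt_id x).const_mul d
    have hden : HasDerivAt (fun y => a * Real.sqrt (b^2 - y^2))
        (a * (-x / Real.sqrt (b^2 - x^2))) x := hsd.const_mul a
    have := hnum.div hden hden0
    refine this.congr_deriv (Eq.symm ?_)
    field_simp
    linear_combination (d * x^2) * hss
  have hu2 : (d * x / (a * Real.sqrt (b^2 - x^2)))^2 < 1 := by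
    rw [div_pow, div_lt_one (by positivity)]
    rw [mul_pow, mul_pow, hd2, hss]
    nlinarith [sq_nonneg x]
  have hune1 : d * x / (a * Real.sqrt (b^2 - x^2)) ≠ -1 := by
    intro h; rw [h] at hu2; norm_num at hu2
  have hune2 : d * x / (a * Real.sqrt (b^2 - x^2)) ≠ 1 := by
    intro h; rw [h] at hu2; norm_num at hu2
  have hB : HasDerivAt (fun y => (d/b) * Real.arcsin (d * y / (a * Real.sqrt (b^2 - y^2))))
      (d^2 / ((b^2 - x^2) * Real.sqrt (a^2 - x^2))) x := by
    have := ((Real.hasDerivAt_arcsin hune1 hune2).comp x hu).const_mul (d/b)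
    refine this.congr_deriv (Eq.symm ?_)
    have he : 1 - (d * x / (a * Real.sqrt (b^2 - x^2)))^2
        = (b * Real.sqrt (a^2 - x^2) / (a * Real.sqrt (b^2 - x^2)))^2 := by
      field_simp
      linear_combination a^2 * hss - x^2 * hd2 - b^2 * htt
    rw [he, Real.sqrt_sq (by positivity)]
    field_simp
  have := hA.sub hB
  refine this.congr_deriv (Eq.symm ?_)
  field_simp
  linear_combination htt + hd2

set_option maxHeartbeats 1000000 in
lemma sqrt_key (a b : ℝ) (ha : 0 < a) (hab : a ≤ b) :
    ∫ x in (-a)..a, Real.sqrt (a^2 - x^2) / (b^2 - x^2)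
      = Real.pi * (b - Real.sqrt (b^2 - a^2)) / b := by
  have hb : 0 < b := ha.trans_le hab
  have hba : (0:ℝ) ≤ b^2 - a^2 := by nlinarith
  have hd2 : Real.sqrt (b^2 - a^2) ^ 2 = b^2 - a^2 := Real.sq_sqrt hba
  have hd0 : (0:ℝ) ≤ Real.sqrt (b^2 - a^2) := Real.sqrt_nonneg _
  set d := Real.sqrt (b^2 - a^2) with hd
  set F : ℝ → ℝ := fun x =>
    Real.arcsin (x/a) - (d/b) * Real.arcsin (d * x / (a * Real.sqrt (b^2 - x^2))) with hF
  have hderiv : ∀ x ∈ Ioo (-a) a,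
      HasDerivAt F (Real.sqrt (a^2 - x^2) / (b^2 - x^2)) x :=
    fun x hx => deriv_key a b d ha hab hb hd2 hd0 x hx
  have hcont : ContinuousOn F (Icc (-a) a) := by
    rcases eq_or_lt_of_le hab with rfl | hlt
    · have hdz : d = 0 := by rw [hd]; simp
      have : F = fun x => Real.arcsin (x/a) := by
        funext x; rw [hF]; simp [hdz]
      rw [this]
      exact (Real.continuous_arcsin.comp (continuous_id.div_const a)).continuousOn
    · apply ContinuousOn.sub
      · exact (Real.continuous_arcsin.comp (continuous_id.div_const a)).continuousOn
      · apply ContinuousOn.mul continuousOn_const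
        apply Real.continuous_arcsin.comp_continuousOn
        apply ContinuousOn.div
        · exact (continuous_const.mul continuous_id).continuousOn
        · exact (continuous_const.mul ((continuous_const.sub (continuous_pow 2)).sqrt)).continuousOn
        · intro x hx
          have hx2 : x^2 ≤ a^2 := by
            rw [← sq_abs]
            exact pow_le_pow_left₀ (abs_nonneg x) (abs_le.2 ⟨hx.1, hx.2⟩) 2
          have hpos : 0 < b^2 - x^2 := by nlinarith
          have : 0 < Real.sqrt (b^2 - x^2) := Real.sqrt_pos.2 hpos
          positivity
  have hnn : ∀ x ∈ Ioo (-a) a, 0 ≤ Real.sqrt (a^2 - x^2) / (b^2 - x^2) := by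
    intro x hx
    have hx2 : x^2 < a^2 := sq_lt_sq' hx.1 hx.2
    have : 0 < b^2 - x^2 := by nlinarith
    positivity
  have hint : IntervalIntegrable (fun x => Real.sqrt (a^2 - x^2) / (b^2 - x^2))
      MeasureTheory.volume (-a) a := by
    apply intervalIntegral.intervalIntegrable_deriv_of_nonneg (g := F)
    · rw [Set.uIcc_of_le (by linarith)]; exact hcont
    · rw [min_eq_left (by linarith), max_eq_right (by linarith)]; exact hderiv
    · rw [min_eq_left (by linarith), max_eq_right (by linarith)]; exact hnn
  rw [intervalIntegral.integral_eq_sub_of_hasDeriv_right_of_le (by linarith) hcont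
    (fun x hx => (hderiv x hx).hasDerivWithinAt) hint]
  have hna : Real.sqrt (b^2 - (-a)^2) = d := by rw [neg_pow]; norm_num; exact hd.symm
  rcases eq_or_ne d 0 with hdz | hdz
  · rw [hF]
    simp only [hdz, zero_div, zero_mul, zero_div, sub_zero, zero_sub]
    rw [div_self ha.ne', Real.arcsin_one]
    have h1 : -a/a = -1 := by field_simp
    rw [h1, Real.arcsin_neg_one]
    field_simp
    norm_num
  · have hdpos : 0 < d := lt_of_le_of_ne hd0 (Ne.symm hdz)
    rw [hF]
    simp only
    rw [hna]
    rw [div_self ha.ne', Real.arcsin_one]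
    have h1 : -a/a = -1 := by field_simp
    rw [h1, Real.arcsin_neg_one]
    have hba' : Real.sqrt (b^2 - a^2) = d := hd.symm
    rw [hba']
    have h2 : d * a / (a * d) = 1 := by field_simp
    have h3 : d * -a / (a * d) = -1 := by field_simp
    rw [h2, h3, Real.arcsin_one, Real.arcsin_neg_one]
    field_simp
    ring

/-- McKay's density `f(x) = (k/(2π))·√(4(k-1)-x²)/(k²-x²)` on
`[-2√(k-1), 2√(k-1)]` (and `0` elsewhere) is a probability density on `ℝ`. -/
theorem stmt_7 (k : ℕ) (hk : 2 ≤ k) (f : ℝ → ℝ)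
    (hf : ∀ x : ℝ, f x =
      if |x| ≤ 2 * Real.sqrt (k - 1) then
        (k / (2 * Real.pi)) * Real.sqrt (4 * ((k : ℝ) - 1) - x ^ 2) / ((k : ℝ) ^ 2 - x ^ 2)
      else 0) :
    (∀ x : ℝ, 0 ≤ f x) ∧ ∫ x : ℝ, f x = 1 := by
  have hk2 : (2:ℝ) ≤ (k:ℝ) := by exact_mod_cast hk
  have hk1 : (1:ℝ) ≤ (k:ℝ) - 1 := by linarith
  set a : ℝ := 2 * Real.sqrt ((k:ℝ) - 1) with haa
  have ha : 0 < a := by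
    have : 0 < Real.sqrt ((k:ℝ) - 1) := Real.sqrt_pos.2 (by linarith)
    positivity
  have ha2 : a^2 = 4 * ((k:ℝ) - 1) := by
    rw [haa, mul_pow, Real.sq_sqrt (by linarith : (0:ℝ) ≤ (k:ℝ) - 1)]; ring
  have ha2k : a^2 ≤ (k:ℝ)^2 := by rw [ha2]; nlinarith
  have hab : a ≤ (k:ℝ) := by
    have h := Real.sqrt_le_sqrt ha2k
    rwa [Real.sqrt_sq ha.le, Real.sqrt_sq (by linarith : (0:ℝ) ≤ (k:ℝ))] at h
  have hpi := Real.pi_pos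
  constructor
  · intro x
    rw [hf x]
    split_ifs with h
    · have hx2 : x^2 ≤ a^2 := by
        rw [← sq_abs]
        exact pow_le_pow_left₀ (abs_nonneg x) h 2
      have hden : 0 ≤ (k:ℝ)^2 - x^2 := by linarith
      have hnum : 0 ≤ (k:ℝ) / (2 * Real.pi) * Real.sqrt (4 * ((k:ℝ) - 1) - x ^ 2) := by
        positivity
      exact div_nonneg hnum hden
    · exact le_refl 0
  · have hsupp : ∀ x ∉ Set.Icc (-a) a, f x = 0 := by
      intro x hx
      rw [hf x, if_neg]
      intro habs
      exact hx (Set.mem_Icc.2 (abs_le.1 habs))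
    rw [← setIntegral_eq_integral_of_forall_compl_eq_zero hsupp,
      MeasureTheory.integral_Icc_eq_integral_Ioc,
      ← intervalIntegral.integral_of_le (by linarith : -a ≤ a)]
    have hcongr : ∀ x ∈ Set.uIcc (-a) a,
        f x = ((k:ℝ)/(2*Real.pi)) * (Real.sqrt (a^2 - x^2) / ((k:ℝ)^2 - x^2)) := by
      intro x hx
      rw [Set.uIcc_of_le (by linarith : -a ≤ a)] at hx
      rw [hf x, if_pos (abs_le.2 ⟨hx.1, hx.2⟩), ← ha2, mul_div_assoc]
    rw [intervalIntegral.integral_congr hcongr, intervalIntegral.integral_const_mul,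
      sqrt_key a (k:ℝ) ha hab]
    have hks : (k:ℝ)^2 - a^2 = ((k:ℝ) - 2)^2 := by rw [ha2]; ring
    rw [hks, Real.sqrt_sq (by linarith : (0:ℝ) ≤ (k:ℝ) - 2)]
    have hk0 : (k:ℝ) ≠ 0 := by linarith
    field_simp
    ring
end

section
/- For all u ≥ 0 and w ∈ ℂ_+, e^{iuw} = 1 − √u ∫_0^∞ (J₁(2√(ut))/√t) e^{−it/w} dt, where J₁(t) = (t/2)∑_{k≥0} (−t²/4)^k/(k!(k+1)!) is the Bessel function of the first kind of order 1. -/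
open MeasureTheory

open Set Filter Real Topology


lemma aux_tendsto (n : ℕ) {c : ℝ} (hc : 0 < c) :
    Tendsto (fun t : ℝ => t ^ n * Real.exp (-c * t)) atTop (𝓝 0) := by
  have h1 : Tendsto (fun t : ℝ => (c * t) ^ n * Real.exp (-(c * t))) atTop (𝓝 0) :=
    (tendsto_pow_mul_exp_neg_atTop_nhds_zero n).comp
      (tendsto_id.const_mul_atTop hc)
  have h2 := h1.const_mul ((c ^ n)⁻¹)
  rw [mul_zero] at h2
  refine h2.congr (fun t => ?_)
  rw [mul_pow]
  field_simp

lemma aux_integrable_real (n : ℕ) {c : ℝ} (hc : 0 < c) :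
    IntegrableOn (fun t : ℝ => t ^ n * Real.exp (-c * t)) (Ioi 0) := by
  refine integrable_of_isBigO_exp_neg (half_pos hc) ?_ ?_
  · exact ((continuous_pow n).mul (continuous_exp.comp
      (continuous_const.mul continuous_id))).continuousOn
  · refine Asymptotics.isBigO_of_div_tendsto_nhds ?_ 0 ?_
    · filter_upwards with x hx; exact absurd hx (Real.exp_ne_zero _)
    · have := aux_tendsto n (half_pos hc)
      refine this.congr' ?_
      filter_upwards with t
      rw [Pi.div_apply, mul_div_assoc, ← Real.exp_sub]
      ring_nf

lemma aux_integrable_cx {z : ℂ} (hz : 0 < z.re) (n : ℕ) :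
    IntegrableOn (fun t : ℝ => (t : ℂ) ^ n * Complex.exp (-(z * t))) (Ioi 0) := by
  refine Integrable.mono' (aux_integrable_real n hz) ?_ ?_
  · refine (Continuous.aestronglyMeasurable ?_).restrict
    exact ((Complex.continuous_ofReal.pow n).mul (Complex.continuous_exp.comp
      ((continuous_const.mul Complex.continuous_ofReal).neg)))
  · rw [ae_restrict_iff' measurableSet_Ioi]
    filter_upwards with t ht
    rw [norm_mul, Complex.norm_exp, norm_pow, Complex.norm_real, Real.norm_eq_abs,
      abs_of_pos ht]
    have h : (-(z * ↑t)).re = -z.re * t := by simp [Complex.mul_re]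
    rw [h]

lemma aux_exp_deriv (z : ℂ) (t : ℝ) :
    HasDerivAt (fun s : ℝ => Complex.exp (-(z * s))) (-z * Complex.exp (-(z * t))) t := by
  have h0 : HasDerivAt (fun s : ℝ => -(z * s)) (-z) t := by
    have : HasDerivAt (fun s : ℝ => (s : ℂ)) 1 t := Complex.ofRealCLM.hasDerivAt
    have h := (this.const_mul z).neg; rw [mul_one] at h; exact h
  simpa [mul_comm] using h0.cexp

lemma aux_tendsto_cx {z : ℂ} (hz : 0 < z.re) (n : ℕ) :
    Tendsto (fun t : ℝ => (t : ℂ) ^ n * Complex.exp (-(z * t))) atTop (𝓝 0) := by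
  rw [tendsto_zero_iff_norm_tendsto_zero]
  have : (fun t : ℝ => t ^ n * Real.exp (-z.re * t)) =ᶠ[atTop]
      fun t => ‖(t : ℂ) ^ n * Complex.exp (-(z * t))‖ := by
    filter_upwards [eventually_gt_atTop (0:ℝ)] with t ht
    rw [norm_mul, norm_pow, Complex.norm_exp, Complex.norm_real, Real.norm_eq_abs,
      abs_of_pos ht]
    congr 2
    simp [Complex.mul_re]
  exact (aux_tendsto n hz).congr' this

lemma aux_integral_cx {z : ℂ} (hz : 0 < z.re) : ∀ n : ℕ,
    ∫ t in Ioi (0:ℝ), (t : ℂ) ^ n * Complex.exp (-(z * t)) = (n.factorial : ℂ) / z ^ (n + 1) := by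
  have hz0 : z ≠ 0 := fun h => by simp [h] at hz
  intro n
  induction n with
  | zero =>
    have hderiv : ∀ x ∈ Ici (0:ℝ), HasDerivAt (fun s : ℝ => -Complex.exp (-(z * s)) / z)
        ((x:ℂ) ^ 0 * Complex.exp (-(z * x))) x := by
      intro x _
      have := ((aux_exp_deriv z x).neg).div_const z
      refine this.congr_deriv ?_
      rw [neg_mul, neg_neg, mul_div_cancel_left₀ _ hz0, pow_zero, one_mul]
    have htend : Tendsto (fun s : ℝ => -Complex.exp (-(z * s)) / z) atTop (𝓝 (0:ℂ)) := by
      have h := (aux_tendsto_cx hz 0).neg.div_const z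
      simp only [pow_zero, one_mul, neg_zero, zero_div] at h
      exact h
    have := integral_Ioi_of_hasDerivAt_of_tendsto' hderiv (aux_integrable_cx hz 0) htend
    rw [this]; simp; field_simp
  | succ n ih =>
    have hderiv : ∀ x ∈ Ici (0:ℝ), HasDerivAt (fun s : ℝ => (s:ℂ) ^ (n+1) * Complex.exp (-(z * s)))
        (((n:ℂ)+1) * (x:ℂ) ^ n * Complex.exp (-(z * x))
          - z * ((x:ℂ) ^ (n+1) * Complex.exp (-(z * x)))) x := by
      intro x _
      have hp : HasDerivAt (fun s : ℝ => (s:ℂ) ^ (n+1)) (((n:ℂ)+1) * (x:ℂ) ^ n) x := by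
        have := (hasDerivAt_pow (n+1) ((x:ℝ):ℂ)).comp_ofReal
        simpa using this
      have := hp.mul (aux_exp_deriv z x)
      refine this.congr_deriv ?_
      ring
    have hint : IntegrableOn (fun x : ℝ =>
        ((n:ℂ)+1) * (x:ℂ) ^ n * Complex.exp (-(z * x))
          - z * ((x:ℂ) ^ (n+1) * Complex.exp (-(z * x)))) (Ioi 0) := by
      have h1 := (aux_integrable_cx hz n).const_mul ((n:ℂ)+1)
      have h2 := (aux_integrable_cx hz (n+1)).const_mul z
      exact (h1.sub h2).congr (Filter.Eventually.of_forall fun x => by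
        simp only [Pi.sub_apply]; ring)
    have key := integral_Ioi_of_hasDerivAt_of_tendsto' hderiv hint (aux_tendsto_cx hz (n+1))
    simp only [Complex.ofReal_zero, ne_eq, zero_pow, Nat.succ_ne_zero, not_false_iff,
      zero_mul, sub_zero, mul_zero, zero_sub, neg_zero] at key
    rw [integral_sub (((aux_integrable_cx hz n).const_mul (((n:ℂ)+1))).congr
        (Filter.Eventually.of_forall fun x => by ring))
      ((aux_integrable_cx hz (n+1)).const_mul z)] at key
    have e1 : ∫ x in Ioi (0:ℝ), ((n:ℂ)+1) * (x:ℂ) ^ n * Complex.exp (-(z * x))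
        = ((n:ℂ)+1) * ((n.factorial : ℂ) / z ^ (n+1)) := by
      rw [← ih, ← integral_const_mul]
      congr 1; ext x; ring
    have e2 : ∫ x in Ioi (0:ℝ), z * ((x:ℂ) ^ (n+1) * Complex.exp (-(z * x)))
        = z * ∫ x in Ioi (0:ℝ), (x:ℂ) ^ (n+1) * Complex.exp (-(z * x)) := integral_const_mul z _
    rw [e1, e2] at key
    set I1 := ∫ x in Ioi (0:ℝ), (x:ℂ) ^ (n+1) * Complex.exp (-(z * x)) with hI1
    have hkey : z * I1 = ((n:ℂ)+1) * ((n.factorial : ℂ) / z ^ (n+1)) := by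
      linear_combination -key
    have hfac : (((n+1).factorial : ℕ) : ℂ) = ((n:ℂ)+1) * (n.factorial : ℂ) := by
      rw [Nat.factorial_succ]; push_cast; ring
    rw [hfac, eq_div_iff (pow_ne_zero (n+2) hz0)]
    calc I1 * z ^ (n + 1 + 1) = (z * I1) * z ^ (n+1) := by ring
      _ = (((n:ℂ)+1) * ((n.factorial : ℂ) / z ^ (n+1))) * z ^ (n+1) := by rw [hkey]
      _ = ((n:ℂ)+1) * (n.factorial : ℂ) := by field_simp

lemma aux_integral_real {c : ℝ} (hc : 0 < c) (n : ℕ) :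
    ∫ t in Ioi (0:ℝ), t ^ n * Real.exp (-c * t) = n.factorial / c ^ (n + 1) := by
  have h := aux_integral_cx (z := (c:ℂ)) (by simpa using hc) n
  have h2 : (↑(∫ t in Ioi (0:ℝ), t ^ n * Real.exp (-c * t)) : ℂ)
      = ∫ t in Ioi (0:ℝ), (t:ℂ) ^ n * Complex.exp (-((c:ℂ) * t)) := by
    rw [show (∫ t in Ioi (0:ℝ), (t:ℂ) ^ n * Complex.exp (-((c:ℂ) * t)))
        = ∫ t in Ioi (0:ℝ), ((t ^ n * Real.exp (-c * t) : ℝ) : ℂ) from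
      setIntegral_congr_fun measurableSet_Ioi fun t _ => by push_cast; ring]
    exact integral_ofReal.symm
  rw [h] at h2
  exact_mod_cast h2

lemma aux_main {z : ℂ} (hz : 0 < z.re) (u : ℝ) (hu : 0 ≤ u) :
    ∫ t in Ioi (0:ℝ),
        (↑(∑' k : ℕ, (Real.sqrt u * (-u) ^ k / ((Nat.factorial k : ℝ) * (Nat.factorial (k+1) : ℝ))) * t ^ k) : ℂ)
          * Complex.exp (-(z * t))
      = ∑' k : ℕ, (↑(Real.sqrt u * (-u) ^ k / ((Nat.factorial k : ℝ) * (Nat.factorial (k+1) : ℝ))) : ℂ)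
          * ((Nat.factorial k : ℂ) / z ^ (k + 1)) := by
  set C : ℕ → ℝ := fun k => Real.sqrt u * (-u) ^ k / ((Nat.factorial k : ℝ) * (Nat.factorial (k+1) : ℝ)) with hC
  set F : ℕ → ℝ → ℂ := fun k t => ((C k : ℝ) : ℂ) * ((t:ℂ) ^ k * Complex.exp (-(z * t))) with hF
  have hFint : ∀ k, Integrable (F k) (volume.restrict (Ioi 0)) := fun k =>
    (aux_integrable_cx hz k).const_mul _
  have hCabs : ∀ k, |C k| = Real.sqrt u * u ^ k / ((Nat.factorial k : ℝ) * (Nat.factorial (k+1) : ℝ)) := by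
    intro k
    rw [hC]
    rw [abs_div, abs_mul, abs_pow, abs_neg, abs_of_nonneg hu,
      abs_of_nonneg (Real.sqrt_nonneg u), abs_of_pos (by positivity)]
  have hnorm : ∀ k, (∫ t in Ioi (0:ℝ), ‖F k t‖) = |C k| * ((Nat.factorial k : ℝ) / z.re ^ (k+1)) := by
    intro k
    have hpt : ∀ t ∈ Ioi (0:ℝ), ‖F k t‖ = |C k| * (t ^ k * Real.exp (-z.re * t)) := by
      intro t ht
      rw [hF]
      rw [norm_mul, norm_mul, Complex.norm_real, norm_pow, Complex.norm_real,
        Complex.norm_exp, Real.norm_eq_abs, Real.norm_eq_abs, abs_of_pos (show (0:ℝ) < t from ht)]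
      have h : (-(z * ↑t)).re = -z.re * t := by simp [Complex.mul_re]
      rw [h]
    rw [setIntegral_congr_fun measurableSet_Ioi hpt, integral_const_mul,
      aux_integral_real hz k]
  have hsum : Summable fun k => ∫ t in Ioi (0:ℝ), ‖F k t‖ := by
    have hbig : Summable fun k : ℕ => (Real.sqrt u / z.re) * ((u / z.re) ^ k / (Nat.factorial k : ℝ)) :=
      (Real.summable_pow_div_factorial _).mul_left _
    refine Summable.of_nonneg_of_le
      (fun k => integral_nonneg fun t => norm_nonneg _) (fun k => ?_) hbig
    rw [hnorm k, hCabs k]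
    have hc : (0:ℝ) < z.re := hz
    have e1 : Real.sqrt u * u ^ k / ((Nat.factorial k : ℝ) * (Nat.factorial (k+1) : ℝ))
        * ((Nat.factorial k : ℝ) / z.re ^ (k+1))
        = Real.sqrt u * u ^ k / ((Nat.factorial (k+1) : ℝ) * z.re ^ (k+1)) := by
      have h1 : (Nat.factorial k : ℝ) ≠ 0 := by positivity
      have h2 : (Nat.factorial (k+1) : ℝ) ≠ 0 := by positivity
      field_simp
    have e2 : (Real.sqrt u / z.re) * ((u / z.re) ^ k / (Nat.factorial k : ℝ))
        = Real.sqrt u * u ^ k / ((Nat.factorial k : ℝ) * z.re ^ (k+1)) := by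
      rw [div_pow]
      have h1 : (Nat.factorial k : ℝ) ≠ 0 := by positivity
      field_simp
      ring_nf
      try exact Or.inl trivial
    rw [e1, e2]
    gcongr
    omega
  have hinterchange := integral_tsum_of_summable_integral_norm hFint hsum
  calc ∫ t in Ioi (0:ℝ), (↑(∑' k, C k * t ^ k) : ℂ) * Complex.exp (-(z * t))
      = ∫ t in Ioi (0:ℝ), ∑' k, F k t := by
        refine setIntegral_congr_fun measurableSet_Ioi (fun t ht => ?_)
        rw [Complex.ofReal_tsum, ← tsum_mul_right]
        exact tsum_congr fun k => by rw [hF]; push_cast; ring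
    _ = ∑' k, ∫ t in Ioi (0:ℝ), F k t := hinterchange.symm
    _ = ∑' k, (↑(C k) : ℂ) * ((Nat.factorial k : ℂ) / z ^ (k+1)) := by
        refine tsum_congr fun k => ?_
        rw [hF]
        rw [integral_const_mul, aux_integral_cx hz k]

lemma aux_term {z : ℂ} (hz0 : z ≠ 0) (u : ℝ) (hu : 0 ≤ u) {X : ℂ}
    (hXz : X * z = -(u:ℂ)) (k : ℕ) :
    (Real.sqrt u : ℂ)
      * ((↑(Real.sqrt u * (-u) ^ k / ((Nat.factorial k : ℝ) * (Nat.factorial (k+1) : ℝ))) : ℂ)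
        * ((Nat.factorial k : ℂ) / z ^ (k + 1)))
      = -(X ^ (k+1) / ((Nat.factorial (k+1) : ℕ) : ℂ)) := by
  have hss : (Real.sqrt u : ℂ) * (Real.sqrt u : ℂ) = (u:ℂ) := by
    rw [← Complex.ofReal_mul, Real.mul_self_sqrt hu]
  have hXk : X ^ (k+1) = (-(u:ℂ)) ^ (k+1) / z ^ (k+1) := by
    rw [eq_div_iff (pow_ne_zero _ hz0), ← mul_pow, hXz]
  have hk1 : ((Nat.factorial k : ℕ) : ℂ) ≠ 0 :=
    Nat.cast_ne_zero.mpr (Nat.factorial_ne_zero k)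
  have e : ((Real.sqrt u : ℂ)
      * ((↑(Real.sqrt u * (-u) ^ k / ((Nat.factorial k : ℝ) * (Nat.factorial (k+1) : ℝ))) : ℂ)
        * ((Nat.factorial k : ℂ) / z ^ (k + 1))))
      = ((Real.sqrt u : ℂ) * (Real.sqrt u : ℂ)) * (-(u:ℂ)) ^ k
        * ((Nat.factorial k : ℂ) / (Nat.factorial k : ℂ))
        * (1 / ((Nat.factorial (k+1) : ℕ) : ℂ)) * (1 / z ^ (k+1)) := by
    push_cast
    ring
  rw [e, hss, div_self hk1, hXk, pow_succ]
  ring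

/-- For `u ≥ 0` and `w ∈ ℂ₊`,
`e^{iuw} = 1 - √u ∫₀^∞ J₁(2√(ut)) t^{-1/2} e^{-it/w} dt`, where `J₁` is the Bessel
function of the first kind of order one. -/
theorem stmt_18 (J₁ : ℝ → ℝ)
    (hJ : ∀ t : ℝ, J₁ t = (t / 2) * ∑' k : ℕ,
      (-(t ^ 2) / 4) ^ k / ((Nat.factorial k : ℝ) * (Nat.factorial (k + 1) : ℝ)))
    (u : ℝ) (hu : 0 ≤ u) (w : ℂ) (hw : 0 < w.im) :
    Complex.exp (Complex.I * u * w)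
      = 1 - (Real.sqrt u : ℂ) * ∫ t in Set.Ioi (0 : ℝ),
          ((J₁ (2 * Real.sqrt (u * t)) / Real.sqrt t : ℝ) : ℂ)
            * Complex.exp (-(Complex.I * t) * w⁻¹) := by
  have hw0 : w ≠ 0 := fun h => by simp [h] at hw
  set z : ℂ := Complex.I * w⁻¹ with hzdef
  have hzre : 0 < z.re := by
    have h : z.re = w.im / Complex.normSq w := by
      rw [hzdef]; simp [Complex.mul_re, Complex.inv_re, Complex.inv_im]; ring
    rw [h]; exact div_pos hw (Complex.normSq_pos.mpr hw0)
  have hz0 : z ≠ 0 := fun h => by rw [h] at hzre; simp at hzre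
  have hpoint : Set.EqOn
      (fun t : ℝ => ((J₁ (2 * Real.sqrt (u * t)) / Real.sqrt t : ℝ) : ℂ)
        * Complex.exp (-(Complex.I * t) * w⁻¹))
      (fun t : ℝ =>
        (↑(∑' k : ℕ, (Real.sqrt u * (-u) ^ k / ((Nat.factorial k : ℝ) * (Nat.factorial (k+1) : ℝ))) * t ^ k) : ℂ)
          * Complex.exp (-(z * t))) (Set.Ioi 0) := by
    intro t ht
    have ht' : (0:ℝ) < t := ht
    have hut : 0 ≤ u * t := mul_nonneg hu ht'.le
    have hst : Real.sqrt t ≠ 0 := ne_of_gt (Real.sqrt_pos.mpr ht')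
    have hexp : -(Complex.I * (t:ℂ)) * w⁻¹ = -(z * t) := by rw [hzdef]; ring
    have hbase : -((2 * Real.sqrt (u * t)) ^ 2) / 4 = -u * t := by
      rw [mul_pow, Real.sq_sqrt hut]; ring
    have hhalf : 2 * Real.sqrt (u * t) / 2 = Real.sqrt u * Real.sqrt t := by
      rw [Real.sqrt_mul hu]; ring
    have hreal : J₁ (2 * Real.sqrt (u * t)) / Real.sqrt t
        = ∑' k : ℕ, (Real.sqrt u * (-u) ^ k / ((Nat.factorial k : ℝ) * (Nat.factorial (k+1) : ℝ))) * t ^ k := by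
      rw [hJ, hbase, hhalf]
      rw [show Real.sqrt u * Real.sqrt t
            * (∑' k : ℕ, (-u * t) ^ k / ((Nat.factorial k : ℝ) * (Nat.factorial (k+1) : ℝ))) / Real.sqrt t
          = Real.sqrt u * ∑' k : ℕ, (-u * t) ^ k / ((Nat.factorial k : ℝ) * (Nat.factorial (k+1) : ℝ)) from by
        field_simp]
      rw [← tsum_mul_left]
      exact tsum_congr fun k => by rw [mul_pow]; ring
    simp only
    rw [hexp, hreal]
  rw [setIntegral_congr_fun measurableSet_Ioi hpoint, aux_main hzre u hu, ← tsum_mul_left]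
  set X := Complex.I * (u:ℂ) * w with hX
  have hss : (Real.sqrt u : ℂ) * (Real.sqrt u : ℂ) = (u:ℂ) := by
    rw [← Complex.ofReal_mul, Real.mul_self_sqrt hu]
  have hXz : X * z = -(u:ℂ) := by
    rw [hX, hzdef]
    rw [show Complex.I * ↑u * w * (Complex.I * w⁻¹) = Complex.I * Complex.I * ↑u * (w * w⁻¹) from by ring,
      mul_inv_cancel₀ hw0, Complex.I_mul_I]
    ring
  rw [tsum_congr (fun k => aux_term hz0 u hu hXz k), tsum_neg]
  have hexpsum : ∑' k : ℕ, X ^ (k+1) / (((Nat.factorial (k+1) : ℕ)) : ℂ) = Complex.exp X - 1 := by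
    have hs : Summable (fun n : ℕ => X ^ n / ((Nat.factorial n : ℕ) : ℂ)) :=
      NormedSpace.expSeries_div_summable X
    have hE : Complex.exp X = ∑' n : ℕ, X ^ n / ((Nat.factorial n : ℕ) : ℂ) := by
      rw [Complex.exp_eq_exp_ℂ, NormedSpace.exp_eq_tsum_div]
    rw [hE, Summable.tsum_eq_zero_add hs]
    simp
  rw [hexpsum]
  ring
end
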